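/- Let v ∈ ℝ^d and let S_1, ..., S_{d+k} be subsets of ℝ^d such that for every K ⊆ [d+k] of size k, v lies in the convex hull of the union of the sets S_i, i ∈ K. Then there exists a rainbow set S (one point from each of some distinct S_i's) with v ∈ conv(S). -/

import Mathlib

open Metric Module
open scoped RealInnerProductSpace

variable {E : Type*} [NormedAddCommGroup E] [InnerProductSpace ℝ E] [FiniteDimensional ℝ E]

/-- An affinely independent finset contained in an affine hyperplane has at most `finrank E`
elements. -/
lemma card_le_of_inner_eq {w : E} (hw : w ≠ 0) {d : ℕ} (hd : Module.finrank ℝ E ≤ d)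
    (t : Finset E) (hai : AffineIndependent ℝ ((↑) : t → E)) {c : ℝ}
    (ht : ∀ x ∈ t, ⟪w, x⟫ = c) : t.card ≤ d := by
  rcases Nat.eq_zero_or_pos t.card with h0 | hpos
  · omega
  obtain ⟨n, hn⟩ : ∃ n, t.card = n + 1 := ⟨t.card - 1, by omega⟩
  set f : E →ₗ[ℝ] ℝ := ((innerSL ℝ w).toLinearMap) with hf
  have hker : vectorSpan ℝ (Set.range ((↑) : t → E)) ≤ LinearMap.ker f := by
    rw [Subtype.range_coe, vectorSpan_def, Submodule.span_le]
    rintro u ⟨x, hx, y, hy, rfl⟩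
    simp only [SetLike.mem_coe, LinearMap.mem_ker, hf, ContinuousLinearMap.coe_coe,
      innerSL_apply_apply, vsub_eq_sub, inner_sub_right, ht x hx, ht y hy, sub_self]
  have hfr : Module.finrank ℝ (vectorSpan ℝ (Set.range ((↑) : t → E))) = n := by
    refine hai.finrank_vectorSpan ?_
    simp [Fintype.card_coe, hn]
  have hne : LinearMap.ker f ≠ ⊤ := by
    intro h
    have : f w = 0 := by rw [← LinearMap.mem_ker, h]; trivial
    simp only [hf, ContinuousLinearMap.coe_coe, innerSL_apply_apply, real_inner_self_eq_norm_sq] at this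
    exact hw (by simpa using this)
  have h1 : Module.finrank ℝ (LinearMap.ker f) < Module.finrank ℝ E :=
    Submodule.finrank_lt hne
  have h2 : n ≤ Module.finrank ℝ (LinearMap.ker f) := hfr ▸ Submodule.finrank_mono hker
  omega

/-- Cooperative colorful Caratheodory, finite version in an abstract space. -/
lemma core_fin (d k : ℕ) (hd : Module.finrank ℝ E ≤ d) (v : E)
    (S : Fin (d + k) → Set E) (hfin : ∀ i, (S i).Finite)
    (hK : ∀ K : Finset (Fin (d + k)), K.card = k → v ∈ convexHull ℝ (⋃ i ∈ K, S i)) :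
    ∃ R : Finset (Fin (d + k) × E), (∀ q ∈ R, q.2 ∈ S q.1) ∧
      Set.InjOn Prod.fst (R : Set (Fin (d + k) × E)) ∧
      v ∈ convexHull ℝ (Prod.snd '' (R : Set (Fin (d + k) × E))) := by
  classical
  set G : Finset (Fin (d + k) × E) :=
    Finset.univ.biUnion (fun i => ((hfin i).toFinset.image fun x => (i, x))) with hG
  have hGmem : ∀ q : Fin (d + k) × E, q ∈ G ↔ q.2 ∈ S q.1 := by
    rintro ⟨i, x⟩
    simp only [hG, Finset.mem_biUnion, Finset.mem_univ, true_and, Finset.mem_image,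
      Set.Finite.mem_toFinset, Prod.mk.injEq]
    constructor
    · rintro ⟨j, y, hy, rfl, rfl⟩; exact hy
    · intro hx; exact ⟨i, x, hx, rfl, rfl⟩
  set cand : Finset (Finset (Fin (d + k) × E)) :=
    G.powerset.filter (fun R => Set.InjOn Prod.fst (R : Set (Fin (d + k) × E)) ∧ R.Nonempty) with hcand
  have hcand_mem : ∀ R : Finset (Fin (d + k) × E), R ∈ cand ↔
      (∀ q ∈ R, q.2 ∈ S q.1) ∧ Set.InjOn Prod.fst (R : Set (Fin (d + k) × E)) ∧ R.Nonempty := by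
    intro R
    simp only [hcand, Finset.mem_filter, Finset.mem_powerset, Finset.subset_iff]
    constructor
    · rintro ⟨h1, h2, h3⟩; exact ⟨fun q hq => (hGmem q).1 (h1 hq), h2, h3⟩
    · rintro ⟨h1, h2, h3⟩; exact ⟨fun {q} hq => (hGmem q).2 (h1 q hq), h2, h3⟩
  -- there is at least one candidate
  have hcand_ne : cand.Nonempty := by
    obtain ⟨K0, -, hK0card⟩ : ∃ K0 ⊆ (Finset.univ : Finset (Fin (d + k))), K0.card = k :=
      Finset.exists_subset_card_eq (by simp)
    have hv0 := hK K0 hK0card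
    have hUne : (⋃ i ∈ K0, S i).Nonempty := by
      rcases Set.eq_empty_or_nonempty (⋃ i ∈ K0, S i) with h | h
      · rw [h, convexHull_empty] at hv0; exact absurd hv0 (Set.notMem_empty v)
      · exact h
    obtain ⟨x, hx⟩ := hUne
    obtain ⟨i, hiK0, hxi⟩ := Set.mem_iUnion₂.1 hx
    refine ⟨{(i, x)}, (hcand_mem _).2 ⟨?_, ?_, Finset.singleton_nonempty _⟩⟩
    · intro q hq; rw [Finset.mem_singleton] at hq; subst hq; exact hxi
    · simp [Set.InjOn]
  obtain ⟨R, hRc, hRmin⟩ :=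
    cand.exists_min_image
      (fun R => infDist v (convexHull ℝ (Prod.snd '' (R : Set (Fin (d + k) × E))))) hcand_ne
  obtain ⟨hRS, hRinj, hRne⟩ := (hcand_mem R).1 hRc
  set A := convexHull ℝ (Prod.snd '' (↑R : Set (Fin (d + k) × E))) with hA
  have hAcomp : IsCompact A := (R.finite_toSet.image _).isCompact_convexHull ℝ
  have hAconv : Convex ℝ A := convex_convexHull _ _
  have hAne : A.Nonempty := by
    rw [hA, convexHull_nonempty_iff]
    exact (hRne.to_set).image _
  obtain ⟨p, hpA, hpd⟩ := hAcomp.exists_infDist_eq_dist hAne v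
  by_cases hvp : v = p
  · exact ⟨R, hRS, hRinj, hvp ▸ hpA⟩
  exfalso
  set w := v - p with hwdef
  have hw0 : w ≠ 0 := sub_ne_zero.2 hvp
  -- the projection inequality
  have hproj : ∀ x ∈ A, ⟪w, x - p⟫ ≤ 0 := by
    have h1 : ‖v - p‖ = ⨅ y : A, ‖v - y‖ := by
      rw [← dist_eq_norm, ← hpd, infDist_eq_iInf]
      simp only [dist_eq_norm]
    exact (norm_eq_iInf_iff_real_inner_le_zero hAconv hpA).1 h1
  -- weights for p in the hull of the second coordinates
  set F : Finset E := R.image Prod.snd with hF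
  have hFA : (↑F : Set E) = Prod.snd '' (↑R : Set (Fin (d + k) × E)) := by
    rw [hF, Finset.coe_image]
  have hpF : p ∈ convexHull ℝ (↑F : Set E) := by rw [hFA]; exact hpA
  obtain ⟨μ, hμ0, hμ1, hμp⟩ := Finset.mem_convexHull'.1 hpF
  -- each point with nonzero weight lies on the supporting hyperplane
  have hFle : ∀ y ∈ F, ⟪w, y - p⟫ ≤ 0 := by
    intro y hy
    exact hproj y (subset_convexHull ℝ _ (hFA ▸ Finset.mem_coe.2 hy))
  have hkey : ∀ y ∈ F, μ y * ⟪w, y - p⟫ = 0 := by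
    have hsum : ∑ y ∈ F, μ y * ⟪w, y - p⟫ = 0 := by
      have : ∑ y ∈ F, μ y * ⟪w, y - p⟫
          = ⟪w, ∑ y ∈ F, μ y • y⟫ - (∑ y ∈ F, μ y) * ⟪w, p⟫ := by
        rw [inner_sum, Finset.sum_mul, ← Finset.sum_sub_distrib]
        refine Finset.sum_congr rfl fun y hy => ?_
        rw [real_inner_smul_right, inner_sub_right]; ring
      rw [this, hμp, hμ1, one_mul, sub_self]
    have := (Finset.sum_eq_zero_iff_of_nonpos (fun y hy =>
      mul_nonpos_of_nonneg_of_nonpos (hμ0 y hy) (hFle y hy))).1 hsum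
    exact this
  set F₀ : Finset E := F.filter (fun y => μ y ≠ 0) with hF₀
  have hF₀plane : ∀ y ∈ F₀, ⟪w, y⟫ = ⟪w, p⟫ := by
    intro y hy
    rw [hF₀, Finset.mem_filter] at hy
    have := hkey y hy.1
    rcases mul_eq_zero.1 this with h | h
    · exact absurd h hy.2
    · rw [inner_sub_right] at h; linarith
  have hpF₀ : p ∈ convexHull ℝ (↑F₀ : Set E) := by
    refine Finset.mem_convexHull'.2 ⟨μ, fun y hy => hμ0 y (Finset.mem_of_mem_filter y hy), ?_, ?_⟩
    · rw [hF₀, Finset.sum_filter_ne_zero, hμ1]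
    · rw [hF₀, Finset.sum_filter_of_ne (fun y _ h => ?_), hμp]
      intro h0; rw [h0, zero_smul] at h; exact h rfl
  -- Caratheodory within the hyperplane
  rw [convexHull_eq_union] at hpF₀
  simp only [Set.mem_iUnion] at hpF₀
  obtain ⟨t, htF₀, hai, hpt⟩ := hpF₀
  have htcard : t.card ≤ d :=
    card_le_of_inner_eq hw0 hd t hai (fun x hx => hF₀plane x (htF₀ hx))
  -- choose one pair of R above each point of t
  have hchoice : ∀ y ∈ t, ∃ q ∈ R, q.2 = y := by
    intro y hy
    have : y ∈ F := Finset.mem_of_mem_filter y (htF₀ hy)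
    rw [hF, Finset.mem_image] at this
    exact this
  set σ : E → Fin (d + k) × E := fun y =>
    if h : ∃ q ∈ R, q.2 = y then h.choose else hRne.choose with hσ
  have hσR : ∀ y ∈ t, σ y ∈ R ∧ (σ y).2 = y := by
    intro y hy
    have h := hchoice y hy
    rw [hσ]; simp only [h, dif_pos]
    exact ⟨h.choose_spec.1, h.choose_spec.2⟩
  set Rt : Finset (Fin (d + k) × E) := t.image σ with hRt
  have hRtR : Rt ⊆ R := by
    intro q hq
    rw [hRt, Finset.mem_image] at hq
    obtain ⟨y, hy, rfl⟩ := hq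
    exact (hσR y hy).1
  have hsndRt : ∀ q ∈ Rt, q.2 ∈ t := by
    intro q hq
    rw [hRt, Finset.mem_image] at hq
    obtain ⟨y, hy, rfl⟩ := hq
    rw [(hσR y hy).2]; exact hy
  have htsub : (↑t : Set E) ⊆ Prod.snd '' (↑Rt : Set (Fin (d + k) × E)) := by
    intro y hy
    rw [Finset.mem_coe] at hy
    exact ⟨σ y, by simp [hRt, Finset.mem_image]; exact ⟨y, hy, rfl⟩, (hσR y hy).2⟩
  -- the colors used by Rt
  set used : Finset (Fin (d + k)) := Rt.image Prod.fst with hused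
  have husedcard : used.card ≤ d :=
    le_trans (Finset.card_image_le) (le_trans (Finset.card_image_le) htcard)
  have hunused : k ≤ (Finset.univ \ used).card := by
    have h1 : (Finset.univ \ used).card = (d + k) - used.card := by
      rw [Finset.card_sdiff_of_subset (Finset.subset_univ _)]
      simp
    omega
  obtain ⟨K, hKsub, hKcard⟩ := Finset.exists_subset_card_eq hunused
  have hvK := hK K hKcard
  -- find a point strictly on the v side of the hyperplane
  have hstrict : ∃ y ∈ ⋃ i ∈ K, S i, 0 < ⟪w, y - p⟫ := by
    by_contra hcon
    push_neg at hcon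
    have hsub : (⋃ i ∈ K, S i) ⊆ {x | ⟪w, x⟫ ≤ ⟪w, p⟫} := by
      intro x hx
      have := hcon x hx
      rw [inner_sub_right] at this
      simpa using this
    have hcv : Convex ℝ {x | ⟪w, x⟫ ≤ ⟪w, p⟫} :=
      convex_halfSpace_le ((innerSL ℝ w).toLinearMap.isLinear) _
    have hvin : v ∈ {x | ⟪w, x⟫ ≤ ⟪w, p⟫} := convexHull_min hsub hcv hvK
    have : ⟪w, w⟫ ≤ 0 := by
      rw [Set.mem_setOf_eq] at hvin
      have := sub_nonpos.2 hvin
      rw [← inner_sub_right] at this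
      exact this
    rw [real_inner_self_eq_norm_sq] at this
    have := norm_eq_zero.1 (le_antisymm (by nlinarith [norm_nonneg w]) (norm_nonneg w))
    exact hw0 this
  obtain ⟨y, hyU, hy⟩ := hstrict
  obtain ⟨i, hiK, hyS⟩ := Set.mem_iUnion₂.1 hyU
  have hinotused : i ∉ used := by
    intro h
    have := hKsub hiK
    rw [Finset.mem_sdiff] at this
    exact this.2 h
  -- the improved candidate
  set R' : Finset (Fin (d + k) × E) := insert (i, y) Rt with hR'
  have hR'c : R' ∈ cand := by
    refine (hcand_mem R').2 ⟨?_, ?_, ?_⟩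
    · intro q hq
      rw [hR', Finset.mem_insert] at hq
      rcases hq with rfl | hq
      · exact hyS
      · exact hRS q (hRtR hq)
    · intro a ha b hb hab
      rw [hR', Finset.coe_insert, Set.mem_insert_iff] at ha hb
      rcases ha with rfl | ha <;> rcases hb with rfl | hb
      · rfl
      · exact absurd (hused ▸ Finset.mem_image_of_mem Prod.fst (Finset.mem_coe.1 hb))
          (by rw [← hab]; exact hinotused)
      · exact absurd (hused ▸ Finset.mem_image_of_mem Prod.fst (Finset.mem_coe.1 ha))
          (by rw [hab]; exact hinotused)
      · exact hRinj (Finset.coe_subset.2 hRtR ha) (Finset.coe_subset.2 hRtR hb) hab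
    · exact ⟨(i, y), Finset.mem_insert_self _ _⟩
  -- the new hull contains p and y
  set A' := convexHull ℝ (Prod.snd '' (↑R' : Set (Fin (d + k) × E))) with hA'
  have hpA' : p ∈ A' := by
    refine convexHull_mono ?_ (convexHull_mono htsub hpt)
    refine Set.image_mono ?_
    rw [hR', Finset.coe_insert]
    exact Set.subset_insert _ _
  have hyA' : y ∈ A' := subset_convexHull ℝ _ ⟨(i, y), by simp [hR'], rfl⟩
  -- a strictly better point on the segment from p to y
  set c : ℝ := ⟪w, y - p⟫ with hc
  have hc0 : 0 < c := hy
  have hyp : y ≠ p := by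
    intro h; rw [hc, h, sub_self, inner_zero_right] at hc0; exact lt_irrefl 0 hc0
  set nsq : ℝ := ‖y - p‖ ^ 2 with hnsq
  have hnsq0 : 0 < nsq := by
    rw [hnsq]
    have h : ‖y - p‖ ≠ 0 := norm_ne_zero_iff.2 (sub_ne_zero.2 hyp)
    positivity
  set t₀ : ℝ := min 1 (c / nsq) with ht₀
  have ht₀0 : 0 < t₀ := lt_min one_pos (div_pos hc0 hnsq0)
  have ht₀1 : t₀ ≤ 1 := min_le_left _ _
  have ht₀n : t₀ * nsq ≤ c := by
    have := min_le_right 1 (c / nsq)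
    calc t₀ * nsq ≤ (c / nsq) * nsq := by
          exact mul_le_mul_of_nonneg_right this (le_of_lt hnsq0)
      _ = c := div_mul_cancel₀ c (ne_of_gt hnsq0)
  set z : E := p + t₀ • (y - p) with hz
  have hzA' : z ∈ A' := by
    have h := (convex_convexHull ℝ _) hpA' hyA' (a := 1 - t₀) (b := t₀)
      (by linarith) (le_of_lt ht₀0) (by ring)
    have heq : (1 - t₀) • p + t₀ • y = z := by
      rw [hz, smul_sub, sub_smul, one_smul]; abel
    rwa [heq] at h
  -- the distance strictly decreases
  have hdist : ‖v - z‖ ^ 2 < ‖v - p‖ ^ 2 := by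
    have hvz : v - z = w - t₀ • (y - p) := by rw [hz, hwdef]; abel
    rw [hvz, norm_sub_sq_real]
    have h1 : ⟪w, t₀ • (y - p)⟫ = t₀ * c := by rw [real_inner_smul_right, hc]
    have h2 : ‖t₀ • (y - p)‖ ^ 2 = t₀ ^ 2 * nsq := by
      rw [norm_smul, mul_pow, hnsq, Real.norm_eq_abs, sq_abs]
    rw [h1, h2]
    nlinarith [mul_pos ht₀0 hc0, mul_le_mul_of_nonneg_left ht₀n (le_of_lt ht₀0)]
  have hlt : ‖v - z‖ < ‖v - p‖ :=
    lt_of_pow_lt_pow_left₀ 2 (norm_nonneg _) hdist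
  have hfinal : infDist v A' < infDist v A := by
    calc infDist v A' ≤ dist v z := infDist_le_dist_of_mem hzA'
      _ = ‖v - z‖ := dist_eq_norm _ _
      _ < ‖v - p‖ := hlt
      _ = dist v p := (dist_eq_norm _ _).symm
      _ = infDist v A := hpd.symm
  exact absurd (hRmin R' hR'c) (not_le.2 hfinal)

/-- Cooperative colorful Caratheodory in an abstract space. -/
lemma core (d k : ℕ) (hd : Module.finrank ℝ E ≤ d) (v : E)
    (S : Fin (d + k) → Set E)
    (hK : ∀ K : Finset (Fin (d + k)), K.card = k → v ∈ convexHull ℝ (⋃ i ∈ K, S i)) :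
    ∃ R : Finset (Fin (d + k) × E), (∀ q ∈ R, q.2 ∈ S q.1) ∧
      Set.InjOn Prod.fst (R : Set (Fin (d + k) × E)) ∧
      v ∈ convexHull ℝ (Prod.snd '' (R : Set (Fin (d + k) × E))) := by
  classical
  have hTK : ∀ K : Finset (Fin (d + k)), K.card = k → ∃ T : Finset E,
      ↑T ⊆ ⋃ i ∈ K, S i ∧ v ∈ convexHull ℝ (↑T : Set E) := by
    intro K hKc
    have h := hK K hKc
    rw [convexHull_eq_union_convexHull_finite_subsets] at h
    simp only [Set.mem_iUnion] at h
    obtain ⟨T, hT1, hT2⟩ := h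
    exact ⟨T, hT1, hT2⟩
  choose T hT1 hT2 using hTK
  set U : Set E := ⋃ Kh : {K : Finset (Fin (d + k)) // K.card = k}, ↑(T Kh.1 Kh.2) with hU
  have hUfin : U.Finite := Set.finite_iUnion fun Kh => (T Kh.1 Kh.2).finite_toSet
  set S' : Fin (d + k) → Set E := fun i => S i ∩ U with hS'
  have hfin' : ∀ i, (S' i).Finite := fun i => hUfin.subset Set.inter_subset_right
  have hK' : ∀ K : Finset (Fin (d + k)), K.card = k → v ∈ convexHull ℝ (⋃ i ∈ K, S' i) := by
    intro K hKc
    refine convexHull_mono ?_ (hT2 K hKc)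
    intro x hx
    have hx1 := hT1 K hKc hx
    obtain ⟨i, hiK, hxi⟩ := Set.mem_iUnion₂.1 hx1
    refine Set.mem_iUnion₂.2 ⟨i, hiK, hxi, ?_⟩
    exact Set.mem_iUnion.2 ⟨⟨K, hKc⟩, hx⟩
  obtain ⟨R, h1, h2, h3⟩ := core_fin d k hd v S' hfin' hK'
  exact ⟨R, fun q hq => (h1 q hq).1, h2, h3⟩

/-- Cooperative colorful Carathéodory: if `v` lies in the convex hull of the
union of every `k` of the `d+k` sets `S_i ⊆ ℝ^d`, then `v` lies in the convex
hull of some rainbow set. -/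
theorem stmt_7 (d k : ℕ) (hk : 1 ≤ k) (v : Fin d → ℝ)
    (S : Fin (d + k) → Set (Fin d → ℝ))
    (hK : ∀ K : Finset (Fin (d + k)), K.card = k →
      v ∈ convexHull ℝ (⋃ i ∈ K, S i)) :
    ∃ (m : ℕ) (g : Fin m ↪ Fin (d + k)) (x : Fin m → (Fin d → ℝ)),
      (∀ j, x j ∈ S (g j)) ∧ v ∈ convexHull ℝ (Set.range x) := by
  classical
  obtain ⟨R, hRS, hRinj, hRv⟩ := core (E := EuclideanSpace ℝ (Fin d)) d k
    (le_of_eq finrank_euclideanSpace_fin) (WithLp.toLp 2 v) (fun i => WithLp.ofLp ⁻¹' S i) (by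
      intro K hKc
      have h := Set.mem_image_of_mem
        (WithLp.linearEquiv 2 ℝ (Fin d → ℝ)).symm.toLinearMap (hK K hKc)
      rw [LinearMap.image_convexHull] at h
      refine convexHull_mono ?_ h
      rintro _ ⟨x, hx, rfl⟩
      obtain ⟨i, hiK, hxi⟩ := Set.mem_iUnion₂.1 hx
      exact Set.mem_iUnion₂.2 ⟨i, hiK, hxi⟩)
  set e := (Fintype.equivFin {q // q ∈ R}) with he
  refine ⟨Fintype.card {q // q ∈ R}, ⟨fun j => ((e.symm j).1).1, ?_⟩,
    fun j => ((e.symm j).1).2, fun j => hRS _ (e.symm j).2, ?_⟩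
  · intro j1 j2 h
    have := hRinj (e.symm j1).2 (e.symm j2).2 h
    have h2 : e.symm j1 = e.symm j2 := Subtype.ext this
    exact e.symm.injective h2
  · have hr : Set.range (fun j => ((e.symm j).1).2) =
        Prod.snd '' (R : Set (Fin (d + k) × EuclideanSpace ℝ (Fin d))) := by
      ext z
      constructor
      · rintro ⟨j, rfl⟩; exact ⟨(e.symm j).1, (e.symm j).2, rfl⟩
      · rintro ⟨q, hq, rfl⟩
        refine ⟨e ⟨q, hq⟩, ?_⟩
        show ((e.symm (e ⟨q, hq⟩)).1).2 = q.2
        rw [Equiv.symm_apply_apply]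
    have h := Set.mem_image_of_mem (WithLp.linearEquiv 2 ℝ (Fin d → ℝ)).toLinearMap hRv
    rw [LinearMap.image_convexHull, ← hr, ← Set.range_comp] at h
    exact h
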